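/- A 3×3 complex Hermitian matrix S = [S_{kj}] is positive semidefinite if and only if S11, S22, S33 ≥ 0 and there exist complex numbers g12, g23, g13, each of modulus at most 1, such that S12 = √S11 · g12 · √S22, S23 = √S22 · g23 · √S33, and S13 = √S11 · (g12·g23 + √(1−|g12|²) · g13 · √(1−|g23|²)) · √S33. -/

import Mathlib

set_option maxHeartbeats 1000000

open ComplexOrder Complex Matrix

private lemma normSq_le_zero' {z : ℂ} (h : Complex.normSq z ≤ 0) : z = 0 :=
  Complex.normSq_eq_zero.mp (le_antisymm h (Complex.normSq_nonneg z))

private lemma norm_le_of_normSq_le {z : ℂ} {x : ℝ} (h : Complex.normSq z ≤ x * x) (hx : 0 ≤ x) :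
    ‖z‖ ≤ x := by
  rw [Complex.norm_def]
  calc Real.sqrt (normSq z) ≤ Real.sqrt (x*x) := Real.sqrt_le_sqrt h
  _ = x := Real.sqrt_mul_self hx

private lemma quad3 (S : Matrix (Fin 3) (Fin 3) ℂ) (hS : S.PosSemidef) (v : Fin 3 → ℂ) :
    0 ≤ ((starRingEnd ℂ) (v 0) * (S 0 0 * v 0 + S 0 1 * v 1 + S 0 2 * v 2) +
        (starRingEnd ℂ) (v 1) * (S 1 0 * v 0 + S 1 1 * v 1 + S 1 2 * v 2) +
        (starRingEnd ℂ) (v 2) * (S 2 0 * v 0 + S 2 1 * v 1 + S 2 2 * v 2)).re := by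
  have := hS.re_dotProduct_nonneg v
  simpa [dotProduct, Matrix.mulVec, Fin.sum_univ_three, mul_add, RCLike.re] using this

private lemma pair_key {p : ℂ} {A B : ℝ} (hA : 0 ≤ A) (hB : 0 ≤ B)
    (h : ∀ t : ℝ, 0 ≤ A * normSq p * (t*t) + (2 * normSq p) * t + B) :
    normSq p ≤ A * B := by
  have hd := discrim_le_zero h
  rw [discrim] at hd
  by_cases h0 : normSq p = 0
  · rw [h0]; positivity
  · have hpos : 0 < normSq p := lt_of_le_of_ne (Complex.normSq_nonneg p) (Ne.symm h0)
    nlinarith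

private lemma diag_nn (S : Matrix (Fin 3) (Fin 3) ℂ) (hpsd : S.PosSemidef) (i : Fin 3) :
    0 ≤ (S i i).re := by
  fin_cases i
  · simpa using quad3 S hpsd ![1,0,0]
  · simpa using quad3 S hpsd ![0,1,0]
  · simpa using quad3 S hpsd ![0,0,1]

private lemma pair01 (S : Matrix (Fin 3) (Fin 3) ℂ) (hpsd : S.PosSemidef) (hS : S.IsHermitian) :
    normSq (S 0 1) ≤ (S 0 0).re * (S 1 1).re := by
  apply pair_key (diag_nn S hpsd 0) (diag_nn S hpsd 1)
  intro t
  have e10 : S 1 0 = (starRingEnd ℂ) (S 0 1) := (hS.apply 1 0).symm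
  have e00 : S 0 0 = ((S 0 0).re : ℂ) := (Complex.conj_eq_iff_re.mp (hS.apply 0 0)).symm
  have e11 : S 1 1 = ((S 1 1).re : ℂ) := (Complex.conj_eq_iff_re.mp (hS.apply 1 1)).symm
  have h := quad3 S hpsd ![(t:ℂ) * S 0 1, 1, 0]
  simp only [Matrix.cons_val_zero, Matrix.cons_val_one, Matrix.head_cons, Matrix.cons_val_two,
    Matrix.tail_cons, mul_one, mul_zero, add_zero, map_zero, zero_mul, _root_.map_one, one_mul] at h
  rw [e10, e00, e11] at h
  simp only [Complex.normSq_apply]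
  simp only [_root_.map_mul, Complex.conj_ofReal, Complex.add_re, Complex.mul_re, Complex.mul_im,
    Complex.add_im, Complex.conj_re, Complex.conj_im, Complex.ofReal_re, Complex.ofReal_im,
    Complex.one_re, Complex.one_im] at h
  ring_nf at h ⊢
  linarith [h]

private lemma pair12 (S : Matrix (Fin 3) (Fin 3) ℂ) (hpsd : S.PosSemidef) (hS : S.IsHermitian) :
    normSq (S 1 2) ≤ (S 1 1).re * (S 2 2).re := by
  apply pair_key (diag_nn S hpsd 1) (diag_nn S hpsd 2)
  intro t
  have e21 : S 2 1 = (starRingEnd ℂ) (S 1 2) := (hS.apply 2 1).symm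
  have e11 : S 1 1 = ((S 1 1).re : ℂ) := (Complex.conj_eq_iff_re.mp (hS.apply 1 1)).symm
  have e22 : S 2 2 = ((S 2 2).re : ℂ) := (Complex.conj_eq_iff_re.mp (hS.apply 2 2)).symm
  have h := quad3 S hpsd ![0, (t:ℂ) * S 1 2, 1]
  simp only [Matrix.cons_val_zero, Matrix.cons_val_one, Matrix.head_cons, Matrix.cons_val_two,
    Matrix.tail_cons, mul_one, mul_zero, add_zero, zero_add, map_zero, zero_mul, _root_.map_one, one_mul] at h
  rw [e21, e11, e22] at h
  simp only [Complex.normSq_apply]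
  simp only [_root_.map_mul, Complex.conj_ofReal, Complex.add_re, Complex.mul_re, Complex.mul_im,
    Complex.add_im, Complex.conj_re, Complex.conj_im, Complex.ofReal_re, Complex.ofReal_im,
    Complex.one_re, Complex.one_im] at h
  ring_nf at h ⊢
  linarith [h]

private lemma pair02 (S : Matrix (Fin 3) (Fin 3) ℂ) (hpsd : S.PosSemidef) (hS : S.IsHermitian) :
    normSq (S 0 2) ≤ (S 0 0).re * (S 2 2).re := by
  apply pair_key (diag_nn S hpsd 0) (diag_nn S hpsd 2)
  intro t
  have e20 : S 2 0 = (starRingEnd ℂ) (S 0 2) := (hS.apply 2 0).symm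
  have e00 : S 0 0 = ((S 0 0).re : ℂ) := (Complex.conj_eq_iff_re.mp (hS.apply 0 0)).symm
  have e22 : S 2 2 = ((S 2 2).re : ℂ) := (Complex.conj_eq_iff_re.mp (hS.apply 2 2)).symm
  have h := quad3 S hpsd ![(t:ℂ) * S 0 2, 0, 1]
  simp only [Matrix.cons_val_zero, Matrix.cons_val_one, Matrix.head_cons, Matrix.cons_val_two,
    Matrix.tail_cons, mul_one, mul_zero, add_zero, zero_add, map_zero, zero_mul, _root_.map_one, one_mul] at h
  rw [e20, e00, e22] at h
  simp only [Complex.normSq_apply]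
  simp only [_root_.map_mul, Complex.conj_ofReal, Complex.add_re, Complex.mul_re, Complex.mul_im,
    Complex.add_im, Complex.conj_re, Complex.conj_im, Complex.ofReal_re, Complex.ofReal_im,
    Complex.one_re, Complex.one_im] at h
  ring_nf at h ⊢
  linarith [h]

/-- Dodgson / Schur inequality: normSq (S02*B - S01*S12) ≤ (AB - |S01|²)(BC - |S12|²). -/
private lemma schur3 (S : Matrix (Fin 3) (Fin 3) ℂ) (hpsd : S.PosSemidef) (hS : S.IsHermitian) :
    normSq (S 0 2 * ((S 1 1).re : ℂ) - S 0 1 * S 1 2) ≤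
      ((S 0 0).re * (S 1 1).re - normSq (S 0 1)) * ((S 1 1).re * (S 2 2).re - normSq (S 1 2)) := by
  obtain ⟨d, hd0, hd⟩ : ∃ d : ℝ, 0 ≤ d ∧ S.det = (d:ℂ) := by
    refine ⟨∏ i, hS.eigenvalues i, Finset.prod_nonneg fun i _ => hpsd.eigenvalues_nonneg i, ?_⟩
    rw [hS.det_eq_prod_eigenvalues]; push_cast; rfl
  have e10 : S 1 0 = (starRingEnd ℂ) (S 0 1) := (hS.apply 1 0).symm
  have e20 : S 2 0 = (starRingEnd ℂ) (S 0 2) := (hS.apply 2 0).symm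
  have e21 : S 2 1 = (starRingEnd ℂ) (S 1 2) := (hS.apply 2 1).symm
  have e00 : S 0 0 = ((S 0 0).re : ℂ) := (Complex.conj_eq_iff_re.mp (hS.apply 0 0)).symm
  have e11 : S 1 1 = ((S 1 1).re : ℂ) := (Complex.conj_eq_iff_re.mp (hS.apply 1 1)).symm
  have e22 : S 2 2 = ((S 2 2).re : ℂ) := (Complex.conj_eq_iff_re.mp (hS.apply 2 2)).symm
  set A := (S 0 0).re
  set B := (S 1 1).re
  set C := (S 2 2).re
  have hdd := Matrix.det_fin_three S
  rw [hd, e10, e20, e21, e00, e11, e22] at hdd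
  have hc : ((B * d : ℝ) : ℂ) =
      ((A*B : ℝ) - S 0 1 * (starRingEnd ℂ) (S 0 1)) * ((B*C : ℝ) - S 1 2 * (starRingEnd ℂ) (S 1 2))
        - (S 0 2 * (B:ℝ) - S 0 1 * S 1 2) *
          ((starRingEnd ℂ) (S 0 2) * (B:ℝ) - (starRingEnd ℂ) (S 0 1) * (starRingEnd ℂ) (S 1 2)) := by
    push_cast
    linear_combination (B:ℂ) * hdd
  have hw : ((starRingEnd ℂ) (S 0 2) * ((B:ℝ):ℂ) - (starRingEnd ℂ) (S 0 1) * (starRingEnd ℂ) (S 1 2))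
      = (starRingEnd ℂ) (S 0 2 * ((B:ℝ):ℂ) - S 0 1 * S 1 2) := by
    simp [map_sub, _root_.map_mul, Complex.conj_ofReal]
  rw [hw, Complex.mul_conj, Complex.mul_conj, Complex.mul_conj] at hc
  have hr : B * d = (A*B - normSq (S 0 1)) * (B*C - normSq (S 1 2))
      - normSq (S 0 2 * ((B:ℝ):ℂ) - S 0 1 * S 1 2) := by exact_mod_cast hc
  nlinarith [mul_nonneg (diag_nn S hpsd 1) hd0]

private lemma main_case (p q s : ℂ) (A B C : ℝ) (hApos : 0 < A) (hBpos : 0 < B) (hCpos : 0 < C)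
    (hp : normSq p ≤ A * B) (hq : normSq q ≤ B * C)
    (hsch : normSq (s * ((B:ℝ):ℂ) - p * q) ≤ (A*B - normSq p) * (B*C - normSq q)) :
    ∃ g12 g23 g13 : ℂ, ‖g12‖ ≤ 1 ∧ ‖g23‖ ≤ 1 ∧ ‖g13‖ ≤ 1 ∧
      p = (Real.sqrt A : ℂ) * g12 * (Real.sqrt B : ℂ) ∧
      q = (Real.sqrt B : ℂ) * g23 * (Real.sqrt C : ℂ) ∧
      s = (Real.sqrt A : ℂ) *
          (g12 * g23 + (Real.sqrt (1 - ‖g12‖ ^ 2) : ℂ) * g13 * (Real.sqrt (1 - ‖g23‖ ^ 2) : ℂ)) *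
          (Real.sqrt C : ℂ) := by
  set a := Real.sqrt A with hadef
  set b := Real.sqrt B with hbdef
  set c := Real.sqrt C with hcdef
  have hA := hApos.le; have hB := hBpos.le; have hC := hCpos.le
  have haa : a * a = A := Real.mul_self_sqrt hA
  have hbb : b * b = B := Real.mul_self_sqrt hB
  have hcc : c * c = C := Real.mul_self_sqrt hC
  have ha : 0 < a := Real.sqrt_pos.mpr hApos
  have hb : 0 < b := Real.sqrt_pos.mpr hBpos
  have hc : 0 < c := Real.sqrt_pos.mpr hCpos
  have haC : ((a:ℝ):ℂ) ≠ 0 := Complex.ofReal_ne_zero.mpr ha.ne'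
  have hbC : ((b:ℝ):ℂ) ≠ 0 := Complex.ofReal_ne_zero.mpr hb.ne'
  have hcC : ((c:ℝ):ℂ) ≠ 0 := Complex.ofReal_ne_zero.mpr hc.ne'
  have hbB : ((b:ℝ):ℂ) * ((b:ℝ):ℂ) = ((B:ℝ):ℂ) := by exact_mod_cast hbb
  set T0 := A*B - normSq p with hT0def
  set T1 := B*C - normSq q with hT1def
  have hT0 : 0 ≤ T0 := by simp [hT0def]; linarith
  have hT1 : 0 ≤ T1 := by simp [hT1def]; linarith
  -- norms of g12, g23
  have hnab : ‖((a:ℝ):ℂ) * ((b:ℝ):ℂ)‖ = a * b := by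
    simp [Complex.norm_real, abs_of_pos ha, abs_of_pos hb]
  have hnbc : ‖((b:ℝ):ℂ) * ((c:ℝ):ℂ)‖ = b * c := by
    simp [Complex.norm_real, abs_of_pos hb, abs_of_pos hc]
  have hg12 : ‖p / (↑a * ↑b)‖ ≤ 1 := by
    rw [norm_div, hnab, div_le_one (by positivity)]
    exact norm_le_of_normSq_le (by nlinarith) (by positivity)
  have hg23 : ‖q / (↑b * ↑c)‖ ≤ 1 := by
    rw [norm_div, hnbc, div_le_one (by positivity)]
    exact norm_le_of_normSq_le (by nlinarith) (by positivity)
  -- sqrt simplifications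
  have hn12 : 1 - ‖p / (↑a * ↑b)‖^2 = T0 / (A*B) := by
    rw [norm_div, hnab, div_pow]
    rw [show ‖p‖^2 = normSq p from (Complex.sq_norm p).symm ▸ rfl]
    rw [show (a*b)^2 = A*B by rw [← haa, ← hbb]; ring]
    field_simp [hT0def]
    exact hT0def.symm
  have hn23 : 1 - ‖q / (↑b * ↑c)‖^2 = T1 / (B*C) := by
    rw [norm_div, hnbc, div_pow]
    rw [show ‖q‖^2 = normSq q from (Complex.sq_norm q).symm ▸ rfl]
    rw [show (b*c)^2 = B*C by rw [← hbb, ← hcc]; ring]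
    field_simp [hT1def]
    exact hT1def.symm
  have hs12 : Real.sqrt (1 - ‖p / (↑a * ↑b)‖^2) = Real.sqrt T0 / (a*b) := by
    rw [hn12, Real.sqrt_div hT0, show Real.sqrt (A*B) = a*b by
      rw [Real.sqrt_mul hA, ← hadef, ← hbdef]]
  have hs23 : Real.sqrt (1 - ‖q / (↑b * ↑c)‖^2) = Real.sqrt T1 / (b*c) := by
    rw [hn23, Real.sqrt_div hT1, show Real.sqrt (B*C) = b*c by
      rw [Real.sqrt_mul hB, ← hbdef, ← hcdef]]
  have eq1 : p = (a:ℂ) * (p / (↑a * ↑b)) * (b:ℂ) := by field_simp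
  have eq2 : q = (b:ℂ) * (q / (↑b * ↑c)) * (c:ℂ) := by field_simp
  by_cases hDz : T0 * T1 = 0
  · have hw0 : s * ((B:ℝ):ℂ) - p * q = 0 := normSq_le_zero' (by rw [hDz] at hsch; exact hsch)
    have hw0' : s * ((B:ℝ):ℂ) = p * q := by linear_combination hw0
    refine ⟨p / (↑a * ↑b), q / (↑b * ↑c), 0, ?_, ?_, ?_, ?_, ?_, ?_⟩
    · exact hg12
    · exact hg23
    · simp
    · exact eq1
    · exact eq2
    · rw [hs12, hs23]
      field_simp
      linear_combination hw0' + s * hbB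
  · have hT0pos : 0 < T0 := lt_of_le_of_ne hT0 fun h => hDz (by rw [← h, zero_mul])
    have hT1pos : 0 < T1 := lt_of_le_of_ne hT1 fun h => hDz (by rw [← h, mul_zero])
    set D := Real.sqrt (T0 * T1) with hDdef
    have hDpos : 0 < D := Real.sqrt_pos.mpr (by positivity)
    have hDC : ((D:ℝ):ℂ) ≠ 0 := Complex.ofReal_ne_zero.mpr hDpos.ne'
    have hDst : Real.sqrt T0 * Real.sqrt T1 = D := (Real.sqrt_mul hT0 T1).symm
    have hDstC : ((Real.sqrt T0 : ℝ):ℂ) * ((Real.sqrt T1 : ℝ):ℂ) = ((D:ℝ):ℂ) := by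
      exact_mod_cast hDst
    refine ⟨p / (↑a * ↑b), q / (↑b * ↑c), (s * ((B:ℝ):ℂ) - p * q) / ↑D, ?_, ?_, ?_, ?_, ?_, ?_⟩
    · exact hg12
    · exact hg23
    · rw [norm_div]
      have : ‖((D:ℝ):ℂ)‖ = D := by simp [Complex.norm_real, abs_of_pos hDpos]
      rw [this, div_le_one hDpos]
      exact norm_le_of_normSq_le (by rw [show D*D = T0*T1 from Real.mul_self_sqrt (by positivity)]; exact hsch) hDpos.le
    · exact eq1
    · exact eq2
    · rw [hs12, hs23]
      push_cast
      field_simp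
      rw [← hDstC, ← hbB]
      ring

private lemma forward (S : Matrix (Fin 3) (Fin 3) ℂ) (hS : S.IsHermitian) (hpsd : S.PosSemidef) :
    0 ≤ (S 0 0).re ∧ 0 ≤ (S 1 1).re ∧ 0 ≤ (S 2 2).re ∧
      ∃ g12 g23 g13 : ℂ, ‖g12‖ ≤ 1 ∧ ‖g23‖ ≤ 1 ∧ ‖g13‖ ≤ 1 ∧
        S 0 1 = (Real.sqrt (S 0 0).re : ℂ) * g12 * (Real.sqrt (S 1 1).re : ℂ) ∧
        S 1 2 = (Real.sqrt (S 1 1).re : ℂ) * g23 * (Real.sqrt (S 2 2).re : ℂ) ∧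
        S 0 2 = (Real.sqrt (S 0 0).re : ℂ) *
            (g12 * g23 +
              (Real.sqrt (1 - ‖g12‖ ^ 2) : ℂ) * g13 * (Real.sqrt (1 - ‖g23‖ ^ 2) : ℂ)) *
            (Real.sqrt (S 2 2).re : ℂ) := by
  have hp := pair01 S hpsd hS
  have hq := pair12 S hpsd hS
  have hs := pair02 S hpsd hS
  have hsch := schur3 S hpsd hS
  set A := (S 0 0).re with hAdef
  set B := (S 1 1).re with hBdef
  set C := (S 2 2).re with hCdef
  have hA := diag_nn S hpsd 0
  have hB := diag_nn S hpsd 1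
  have hC := diag_nn S hpsd 2
  rw [← hAdef] at hA; rw [← hBdef] at hB; rw [← hCdef] at hC
  set a := Real.sqrt A with hadef
  set b := Real.sqrt B with hbdef
  set c := Real.sqrt C with hcdef
  have haa : a * a = A := Real.mul_self_sqrt hA
  have hbb : b * b = B := Real.mul_self_sqrt hB
  have hcc : c * c = C := Real.mul_self_sqrt hC
  refine ⟨hA, hB, hC, ?_⟩
  by_cases hA0 : A = 0
  · have ha0 : a = 0 := by rw [hadef, hA0, Real.sqrt_zero]
    have hp0 : S 0 1 = 0 := normSq_le_zero' (by rw [hA0, zero_mul] at hp; exact hp)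
    have hs0 : S 0 2 = 0 := normSq_le_zero' (by rw [hA0, zero_mul] at hs; exact hs)
    by_cases hBC : B * C = 0
    · have hq0 : S 1 2 = 0 := normSq_le_zero' (by rw [hBC] at hq; exact hq)
      exact ⟨0, 0, 0, by simp, by simp, by simp, by simp [hp0], by simp [hq0], by simp [hs0, ha0]⟩
    · have hBpos : 0 < B := lt_of_le_of_ne hB fun h => hBC (by rw [← h, zero_mul])
      have hCpos : 0 < C := lt_of_le_of_ne hC fun h => hBC (by rw [← h, mul_zero])
      have hb : 0 < b := Real.sqrt_pos.mpr hBpos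
      have hc : 0 < c := Real.sqrt_pos.mpr hCpos
      refine ⟨0, S 1 2 / (↑b * ↑c), 0, by simp, ?_, by simp, by simp [hp0], ?_, by simp [hs0, ha0]⟩
      · rw [norm_div]
        have hn : ‖((b:ℝ):ℂ) * ((c:ℝ):ℂ)‖ = b * c := by
          simp [Complex.norm_real, abs_of_pos hb, abs_of_pos hc]
        rw [hn, div_le_one (by positivity)]
        exact norm_le_of_normSq_le (by nlinarith) (by positivity)
      · field_simp
  · have hApos : 0 < A := lt_of_le_of_ne hA (Ne.symm hA0)
    have ha : 0 < a := Real.sqrt_pos.mpr hApos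
    by_cases hC0 : C = 0
    · have hc0 : c = 0 := by rw [hcdef, hC0, Real.sqrt_zero]
      have hq0 : S 1 2 = 0 := normSq_le_zero' (by rw [hC0, mul_zero] at hq; exact hq)
      have hs0 : S 0 2 = 0 := normSq_le_zero' (by rw [hC0, mul_zero] at hs; exact hs)
      by_cases hB0 : B = 0
      · have hp0 : S 0 1 = 0 := normSq_le_zero' (by rw [hB0, mul_zero] at hp; exact hp)
        exact ⟨0, 0, 0, by simp, by simp, by simp, by simp [hp0], by simp [hq0], by simp [hs0, hc0]⟩
      · have hBpos : 0 < B := lt_of_le_of_ne hB (Ne.symm hB0)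
        have hb : 0 < b := Real.sqrt_pos.mpr hBpos
        refine ⟨S 0 1 / (↑a * ↑b), 0, 0, ?_, by simp, by simp, ?_, by simp [hq0], by simp [hs0, hc0]⟩
        · rw [norm_div]
          have hn : ‖((a:ℝ):ℂ) * ((b:ℝ):ℂ)‖ = a * b := by
            simp [Complex.norm_real, abs_of_pos ha, abs_of_pos hb]
          rw [hn, div_le_one (by positivity)]
          exact norm_le_of_normSq_le (by nlinarith) (by positivity)
        · field_simp
    · have hCpos : 0 < C := lt_of_le_of_ne hC (Ne.symm hC0)
      have hc : 0 < c := Real.sqrt_pos.mpr hCpos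
      by_cases hB0 : B = 0
      · have hp0 : S 0 1 = 0 := normSq_le_zero' (by rw [hB0, mul_zero] at hp; exact hp)
        have hq0 : S 1 2 = 0 := normSq_le_zero' (by rw [hB0, zero_mul] at hq; exact hq)
        refine ⟨0, 0, S 0 2 / (↑a * ↑c), by simp, by simp, ?_, by simp [hp0], by simp [hq0], ?_⟩
        · rw [norm_div]
          have hn : ‖((a:ℝ):ℂ) * ((c:ℝ):ℂ)‖ = a * c := by
            simp [Complex.norm_real, abs_of_pos ha, abs_of_pos hc]
          rw [hn, div_le_one (by positivity)]
          exact norm_le_of_normSq_le (by nlinarith) (by positivity)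
        · simp only [norm_zero, mul_zero, zero_mul, zero_add, ne_eq, OfNat.ofNat_ne_zero,
            not_false_eq_true, zero_pow, sub_zero, Real.sqrt_one, Complex.ofReal_one, one_mul, mul_one]
          field_simp
      · -- main case : A, B, C > 0
        have hBpos : 0 < B := lt_of_le_of_ne hB (Ne.symm hB0)
        have hb : 0 < b := Real.sqrt_pos.mpr hBpos
        exact main_case (S 0 1) (S 1 2) (S 0 2) A B C hApos hBpos hCpos hp hq hsch


private lemma backward (S : Matrix (Fin 3) (Fin 3) ℂ) (hS : S.IsHermitian)
    (h : 0 ≤ (S 0 0).re ∧ 0 ≤ (S 1 1).re ∧ 0 ≤ (S 2 2).re ∧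
      ∃ g12 g23 g13 : ℂ, ‖g12‖ ≤ 1 ∧ ‖g23‖ ≤ 1 ∧ ‖g13‖ ≤ 1 ∧
        S 0 1 = (Real.sqrt (S 0 0).re : ℂ) * g12 * (Real.sqrt (S 1 1).re : ℂ) ∧
        S 1 2 = (Real.sqrt (S 1 1).re : ℂ) * g23 * (Real.sqrt (S 2 2).re : ℂ) ∧
        S 0 2 = (Real.sqrt (S 0 0).re : ℂ) *
            (g12 * g23 +
              (Real.sqrt (1 - ‖g12‖ ^ 2) : ℂ) * g13 * (Real.sqrt (1 - ‖g23‖ ^ 2) : ℂ)) *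
            (Real.sqrt (S 2 2).re : ℂ)) : S.PosSemidef := by
  obtain ⟨hA, hB, hC, g12, g23, g13, h1, h2, h3, e1, e2, e3⟩ := h
  set A := (S 0 0).re with hAdef
  set B := (S 1 1).re with hBdef
  set C := (S 2 2).re with hCdef
  set a := Real.sqrt A with hadef
  set b := Real.sqrt B with hbdef
  set c := Real.sqrt C with hcdef
  set s12 := Real.sqrt (1 - ‖g12‖ ^ 2) with hs12def
  set s23 := Real.sqrt (1 - ‖g23‖ ^ 2) with hs23def
  have hg12n : 0 ≤ 1 - ‖g12‖ ^ 2 := by nlinarith [norm_nonneg g12]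
  have hg23n : 0 ≤ 1 - ‖g23‖ ^ 2 := by nlinarith [norm_nonneg g23]
  have hs12sq : s12 ^ 2 = 1 - ‖g12‖ ^ 2 := Real.sq_sqrt hg12n
  have hs23sq : s23 ^ 2 = 1 - ‖g23‖ ^ 2 := Real.sq_sqrt hg23n
  have haa : (a:ℂ) * (a:ℂ) = ((A:ℝ):ℂ) := by exact_mod_cast Real.mul_self_sqrt hA
  have hbb : (b:ℂ) * (b:ℂ) = ((B:ℝ):ℂ) := by exact_mod_cast Real.mul_self_sqrt hB
  have hcc : (c:ℂ) * (c:ℂ) = ((C:ℝ):ℂ) := by exact_mod_cast Real.mul_self_sqrt hC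
  have hnsq12 : normSq g12 = ‖g12‖ ^ 2 := by rw [Complex.normSq_eq_norm_sq]
  have hnsq23 : normSq g23 = ‖g23‖ ^ 2 := by rw [Complex.normSq_eq_norm_sq]
  have hnsq13 : normSq g13 = ‖g13‖ ^ 2 := by rw [Complex.normSq_eq_norm_sq]
  have hone12 : g12 * (starRingEnd ℂ) g12 + ((s12:ℝ):ℂ)^2 = 1 := by
    rw [Complex.mul_conj]
    rw [show ((s12:ℝ):ℂ)^2 = ((s12^2 : ℝ):ℂ) by push_cast; ring, hs12sq, hnsq12]
    push_cast; ring
  have hone23 : g23 * (starRingEnd ℂ) g23 + ((s23:ℝ):ℂ)^2 = 1 := by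
    rw [Complex.mul_conj]
    rw [show ((s23:ℝ):ℂ)^2 = ((s23^2 : ℝ):ℂ) by push_cast; ring, hs23sq, hnsq23]
    push_cast; ring
  set x := g12 * g23 + ((s12:ℝ):ℂ) * g13 * ((s23:ℝ):ℂ) with hxdef
  set y := ((s12:ℝ):ℂ) * g23 - (starRingEnd ℂ) g12 * g13 * ((s23:ℝ):ℂ) with hydef
  have key : x * (starRingEnd ℂ) x + y * (starRingEnd ℂ) y =
      (g12 * (starRingEnd ℂ) g12 + ((s12:ℝ):ℂ)^2) *
        (g23 * (starRingEnd ℂ) g23 + ((s23:ℝ):ℂ)^2 * (g13 * (starRingEnd ℂ) g13)) := by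
    rw [hxdef, hydef]
    simp only [map_add, map_sub, _root_.map_mul, Complex.conj_conj, Complex.conj_ofReal]
    ring
  have keyr : normSq x + normSq y = normSq g23 + s23^2 * normSq g13 := by
    rw [hone12, one_mul] at key
    rw [Complex.mul_conj, Complex.mul_conj, Complex.mul_conj, Complex.mul_conj] at key
    exact_mod_cast key
  have hg13n : 0 ≤ 1 - ‖g13‖ ^ 2 := by nlinarith [norm_nonneg g13]
  have hz0 : 0 ≤ 1 - normSq x - normSq y := by
    rw [hnsq23, hnsq13, hs23sq] at keyr
    nlinarith [keyr, mul_nonneg hg23n hg13n]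
  set z := Real.sqrt (1 - normSq x - normSq y) with hzdef
  have hzz : ((z:ℝ):ℂ)^2 = ((1 - normSq x - normSq y : ℝ):ℂ) := by
    rw [show ((z:ℝ):ℂ)^2 = ((z^2 : ℝ):ℂ) by push_cast; ring, Real.sq_sqrt hz0]
  have hxyz : x * (starRingEnd ℂ) x + y * (starRingEnd ℂ) y + ((z:ℝ):ℂ)^2 = 1 := by
    rw [Complex.mul_conj, Complex.mul_conj, hzz]
    push_cast; ring
  -- hermitian entry facts
  have e00 : S 0 0 = ((A:ℝ):ℂ) := (Complex.conj_eq_iff_re.mp (hS.apply 0 0)).symm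
  have e11 : S 1 1 = ((B:ℝ):ℂ) := (Complex.conj_eq_iff_re.mp (hS.apply 1 1)).symm
  have e22 : S 2 2 = ((C:ℝ):ℂ) := (Complex.conj_eq_iff_re.mp (hS.apply 2 2)).symm
  have e10 : S 1 0 = ((a:ℝ):ℂ) * (starRingEnd ℂ) g12 * ((b:ℝ):ℂ) := by
    rw [← hS.apply 1 0, e1]
    simp only [Complex.star_def, _root_.map_mul, Complex.conj_ofReal]
  have e21 : S 2 1 = ((b:ℝ):ℂ) * (starRingEnd ℂ) g23 * ((c:ℝ):ℂ) := by
    rw [← hS.apply 2 1, e2]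
    simp only [Complex.star_def, _root_.map_mul, Complex.conj_ofReal]
  have e20 : S 2 0 = ((a:ℝ):ℂ) * (starRingEnd ℂ) x * ((c:ℝ):ℂ) := by
    rw [← hS.apply 2 0, e3]
    simp only [Complex.star_def, _root_.map_mul, Complex.conj_ofReal]
  -- the Gram matrix
  set G : Matrix (Fin 3) (Fin 3) ℂ :=
    !![((a:ℝ):ℂ), ((b:ℝ):ℂ) * g12, ((c:ℝ):ℂ) * x;
       0, ((b:ℝ):ℂ) * ((s12:ℝ):ℂ), ((c:ℝ):ℂ) * y;
       0, 0, ((c:ℝ):ℂ) * ((z:ℝ):ℂ)] with hGdef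
  have claim : S = Gᴴ * G := by
    ext i j
    fin_cases i <;> fin_cases j <;>
      simp [hGdef, Matrix.mul_apply, Fin.sum_univ_three, Matrix.conjTranspose_apply,
        Complex.star_def, Matrix.vecHead, Matrix.vecTail]
    · rw [e00, ← haa]
    · rw [e1]; ring
    · rw [e3]; ring
    · rw [e10]; ring
    · rw [e11, ← hbb]
      linear_combination (-(((b:ℝ):ℂ)*((b:ℝ):ℂ))) * hone12
    · rw [e2, hxdef, hydef]
      linear_combination (-(((b:ℝ):ℂ)*((c:ℝ):ℂ))*g23) * hone12
    · rw [e20]; ring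
    · rw [e21, hxdef, hydef]
      simp only [map_add, map_sub, _root_.map_mul, Complex.conj_conj, Complex.conj_ofReal]
      linear_combination (-(((b:ℝ):ℂ)*((c:ℝ):ℂ))*(starRingEnd ℂ) g23) * hone12
    · rw [e22, ← hcc]
      linear_combination (-(((c:ℝ):ℂ)*((c:ℝ):ℂ))) * hxyz
  rw [claim]
  exact Matrix.posSemidef_conjTranspose_mul_self G


open ComplexOrder

/-- the d = 3 scalar case of the parametrization of positive matrices. -/
theorem stmt_1 (S : Matrix (Fin 3) (Fin 3) ℂ) (hS : S.IsHermitian) :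
    S.PosSemidef ↔
      0 ≤ (S 0 0).re ∧ 0 ≤ (S 1 1).re ∧ 0 ≤ (S 2 2).re ∧
        ∃ g12 g23 g13 : ℂ, ‖g12‖ ≤ 1 ∧ ‖g23‖ ≤ 1 ∧ ‖g13‖ ≤ 1 ∧
          S 0 1 = (Real.sqrt (S 0 0).re : ℂ) * g12 * (Real.sqrt (S 1 1).re : ℂ) ∧
          S 1 2 = (Real.sqrt (S 1 1).re : ℂ) * g23 * (Real.sqrt (S 2 2).re : ℂ) ∧
          S 0 2 = (Real.sqrt (S 0 0).re : ℂ) *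
              (g12 * g23 +
                (Real.sqrt (1 - ‖g12‖ ^ 2) : ℂ) * g13 * (Real.sqrt (1 - ‖g23‖ ^ 2) : ℂ)) *
              (Real.sqrt (S 2 2).re : ℂ) := by
  constructor
  · intro hpsd
    exact forward S hS hpsd
  · intro h
    exact backward S hS h
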